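/- arXiv:1901.10684 — 2 statements merged into one kernel-verified Lean document; each statement's English description precedes it below -/
import Mathlib

section
/- Let E be a finite-dimensional real inner product space, U ⊆ E an open set, x ∈ U, and let χ, u : U → ℝ be twice continuously differentiable functions with χ ≥ 0 and u ≥ 1 on U. Set ρ = e^{−χ}, h = ρ·(u−1) + 1, φ = −log u, A = ρ(u−1)/h, and B = ρu/h. Then −Δ(log h)(x) ≤ A(x)·Δχ(x) + B(x)·Δφ(x) + 2·‖∇ρ(x)‖·‖∇u(x)‖/h(x)². -/
lemma alg_key (r s c1 c2 p1 p2 : ℝ) (hr0 : 0 < r) (hr1 : r ≤ 1) (hs : 1 ≤ s) :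
    -(((c1 ^ 2 - c2) * r * (s - 1) - 2 * c1 * r * p1 + r * p2) / (r * (s - 1) + 1)
        - (r * (p1 - c1 * (s - 1))) ^ 2 / (r * (s - 1) + 1) ^ 2) ≤
      r * (s - 1) / (r * (s - 1) + 1) * c2
        + r * s / (r * (s - 1) + 1) * (p1 ^ 2 / s ^ 2 - p2 / s)
        + 2 * |(-(r * c1))| * |p1| / (r * (s - 1) + 1) ^ 2 := by
  have hs0 : (0 : ℝ) < s := by linarith
  have hh0 : (0 : ℝ) < r * (s - 1) + 1 := by nlinarith
  have habs : c1 * r * p1 ≤ |(-(r * c1))| * |p1| := by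
    rw [abs_neg, ← abs_mul, show r * c1 * p1 = c1 * r * p1 by ring]
    exact le_abs_self _
  have key : (r * (s - 1) / (r * (s - 1) + 1) * c2
        + r * s / (r * (s - 1) + 1) * (p1 ^ 2 / s ^ 2 - p2 / s)
        + 2 * |(-(r * c1))| * |p1| / (r * (s - 1) + 1) ^ 2)
      - (-(((c1 ^ 2 - c2) * r * (s - 1) - 2 * c1 * r * p1 + r * p2) / (r * (s - 1) + 1)
        - (r * (p1 - c1 * (s - 1))) ^ 2 / (r * (s - 1) + 1) ^ 2))
      = (s * r * c1 ^ 2 * (s - 1) + r * p1 ^ 2 * (1 - r)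
          + 2 * s * (|(-(r * c1))| * |p1| - c1 * r * p1)) / (s * (r * (s - 1) + 1) ^ 2) := by
    field_simp
    ring
  have hnum : 0 ≤ (s * r * c1 ^ 2 * (s - 1) + r * p1 ^ 2 * (1 - r)
          + 2 * s * (|(-(r * c1))| * |p1| - c1 * r * p1)) / (s * (r * (s - 1) + 1) ^ 2) := by
    apply div_nonneg
    · have h1 : 0 ≤ s * r * c1 ^ 2 * (s - 1) :=
        mul_nonneg (by positivity) (by linarith)
      have h2 : 0 ≤ r * p1 ^ 2 * (1 - r) := by
        apply mul_nonneg (by positivity); linarith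
      nlinarith
    · positivity
  linarith

section
variable {E : Type*} [NormedAddCommGroup E] [NormedSpace ℝ E]

lemma key_dir (U : Set E) (hU : IsOpen U) (x : E) (hx : x ∈ U)
    (χ u : E → ℝ) (hχ : ContDiffOn ℝ 2 χ U) (hu : ContDiffOn ℝ 2 u U)
    (hχ0 : ∀ y ∈ U, 0 ≤ χ y) (hu1 : ∀ y ∈ U, 1 ≤ u y) (v : E) :
    -(fderiv ℝ (fun y => fderiv ℝ (fun z => Real.log (Real.exp (-χ z) * (u z - 1) + 1)) y v) x v) ≤
      Real.exp (-χ x) * (u x - 1) / (Real.exp (-χ x) * (u x - 1) + 1) *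
          fderiv ℝ (fun y => fderiv ℝ χ y v) x v
        + Real.exp (-χ x) * u x / (Real.exp (-χ x) * (u x - 1) + 1) *
          fderiv ℝ (fun y => fderiv ℝ (fun z => -Real.log (u z)) y v) x v
        + 2 * |fderiv ℝ (fun z => Real.exp (-χ z)) x v| * |fderiv ℝ u x v|
            / (Real.exp (-χ x) * (u x - 1) + 1) ^ 2 := by
  have hUx : U ∈ nhds x := hU.mem_nhds hx
  have hud : ∀ y ∈ U, DifferentiableAt ℝ u y := fun y hy =>
    (hu.contDiffAt (hU.mem_nhds hy)).differentiableAt (by norm_num)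
  have hχd : ∀ y ∈ U, DifferentiableAt ℝ χ y := fun y hy =>
    (hχ.contDiffAt (hU.mem_nhds hy)).differentiableAt (by norm_num)
  have hupos : ∀ y ∈ U, (0:ℝ) < u y := fun y hy => lt_of_lt_of_le zero_lt_one (hu1 y hy)
  have hHpos : ∀ y ∈ U, (0:ℝ) < Real.exp (-χ y) * (u y - 1) + 1 := fun y hy => by
    have h1 := hu1 y hy
    have h2 := Real.exp_pos (-χ y)
    nlinarith
  -- building blocks
  have hρ' : ∀ y ∈ U, HasFDerivAt (fun z => Real.exp (-χ z))
      (Real.exp (-χ y) • (-(fderiv ℝ χ y))) y := fun y hy =>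
    ((hχd y hy).hasFDerivAt.neg).exp
  have hH' : ∀ y ∈ U, HasFDerivAt (fun z => Real.exp (-χ z) * (u z - 1) + 1)
      (Real.exp (-χ y) • fderiv ℝ u y
        + (u y - 1) • (Real.exp (-χ y) • (-(fderiv ℝ χ y)))) y := fun y hy =>
    (((hρ' y hy).mul ((hud y hy).hasFDerivAt.sub_const 1)).add_const 1)
  -- first derivative of ρ at x
  have eρ : fderiv ℝ (fun z => Real.exp (-χ z)) x v
      = -(Real.exp (-χ x) * fderiv ℝ χ x v) := by
    rw [(hρ' x hx).fderiv]
    simp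
  -- second derivative CLMs
  have hPd : HasFDerivAt (fun y => fderiv ℝ u y v)
      (fderiv ℝ (fun y => fderiv ℝ u y v) x) x := by
    have hd : DifferentiableAt ℝ (fderiv ℝ u) x :=
      (((hu.contDiffAt hUx).fderiv_right (m := 1) (by norm_num))).differentiableAt one_ne_zero
    exact ((ContinuousLinearMap.apply ℝ ℝ v).differentiable.differentiableAt.comp x hd).hasFDerivAt
  have hCd : HasFDerivAt (fun y => fderiv ℝ χ y v)
      (fderiv ℝ (fun y => fderiv ℝ χ y v) x) x := by
    have hd : DifferentiableAt ℝ (fderiv ℝ χ) x :=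
      (((hχ.contDiffAt hUx).fderiv_right (m := 1) (by norm_num))).differentiableAt one_ne_zero
    exact ((ContinuousLinearMap.apply ℝ ℝ v).differentiable.differentiableAt.comp x hd).hasFDerivAt
  -- φ second derivative value
  have hφev : (fun y => fderiv ℝ (fun z => -Real.log (u z)) y v) =ᶠ[nhds x]
      (fun y => -((u y)⁻¹ * fderiv ℝ u y v)) := by
    filter_upwards [hUx] with y hy
    have hdφ : HasFDerivAt (fun z => -Real.log (u z)) (-((u y)⁻¹ • fderiv ℝ u y)) y :=
      (((hud y hy).hasFDerivAt).log (ne_of_gt (hupos y hy))).neg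
    rw [hdφ.fderiv]
    simp
  have hGφ := (((hasFDerivAt_inv (ne_of_gt (hupos x hx))).comp x
      (hud x hx).hasFDerivAt).mul hPd).neg
  have hGφ' : HasFDerivAt (fun y => -((u y)⁻¹ * fderiv ℝ u y v)) _ x := hGφ
  have eφ : fderiv ℝ (fun y => fderiv ℝ (fun z => -Real.log (u z)) y v) x v
      = (fderiv ℝ u x v) ^ 2 / (u x) ^ 2
        - (fderiv ℝ (fun y => fderiv ℝ u y v) x v) / u x := by
    rw [hφev.fderiv_eq, hGφ'.fderiv]
    have hs : u x ≠ 0 := ne_of_gt (hupos x hx)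
    simp [Function.comp]
    field_simp
    ring
  -- L second derivative value
  have hLev : (fun y => fderiv ℝ (fun z => Real.log (Real.exp (-χ z) * (u z - 1) + 1)) y v)
      =ᶠ[nhds x] (fun y => (Real.exp (-χ y) * (u y - 1) + 1)⁻¹ *
        (Real.exp (-χ y) * fderiv ℝ u y v
          - Real.exp (-χ y) * fderiv ℝ χ y v * (u y - 1))) := by
    filter_upwards [hUx] with y hy
    have hdL : HasFDerivAt (fun z => Real.log (Real.exp (-χ z) * (u z - 1) + 1))
        ((Real.exp (-χ y) * (u y - 1) + 1)⁻¹ • (Real.exp (-χ y) • fderiv ℝ u y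
          + (u y - 1) • (Real.exp (-χ y) • (-(fderiv ℝ χ y))))) y :=
      (hH' y hy).log (ne_of_gt (hHpos y hy))
    rw [hdL.fderiv]
    simp
    ring
  have hG := (((hasFDerivAt_inv (ne_of_gt (hHpos x hx))).comp x (hH' x hx)).mul
      (((hρ' x hx).mul hPd).sub (((hρ' x hx).mul hCd).mul
        ((hud x hx).hasFDerivAt.sub_const 1))))
  have hG' : HasFDerivAt (fun y => (Real.exp (-χ y) * (u y - 1) + 1)⁻¹ *
        (Real.exp (-χ y) * fderiv ℝ u y v
          - Real.exp (-χ y) * fderiv ℝ χ y v * (u y - 1))) _ x := hG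
  have eL : fderiv ℝ (fun y => fderiv ℝ
        (fun z => Real.log (Real.exp (-χ z) * (u z - 1) + 1)) y v) x v
      = (((fderiv ℝ χ x v) ^ 2 - fderiv ℝ (fun y => fderiv ℝ χ y v) x v) * Real.exp (-χ x)
            * (u x - 1)
          - 2 * fderiv ℝ χ x v * Real.exp (-χ x) * fderiv ℝ u x v
          + Real.exp (-χ x) * fderiv ℝ (fun y => fderiv ℝ u y v) x v)
          / (Real.exp (-χ x) * (u x - 1) + 1)
        - (Real.exp (-χ x) * (fderiv ℝ u x v - fderiv ℝ χ x v * (u x - 1))) ^ 2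
          / (Real.exp (-χ x) * (u x - 1) + 1) ^ 2 := by
    rw [hLev.fderiv_eq, hG'.fderiv]
    have hH0 : Real.exp (-χ x) * (u x - 1) + 1 ≠ 0 := ne_of_gt (hHpos x hx)
    simp [Function.comp]
    field_simp
    ring
  rw [eρ, eφ, eL]
  exact alg_key (Real.exp (-χ x)) (u x) (fderiv ℝ χ x v)
    (fderiv ℝ (fun y => fderiv ℝ χ y v) x v) (fderiv ℝ u x v)
    (fderiv ℝ (fun y => fderiv ℝ u y v) x v) (Real.exp_pos _)
    (Real.exp_le_one_iff.mpr (by simpa using hχ0 x hx)) (hu1 x hx)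

end

section
variable {E : Type*} [NormedAddCommGroup E] [NormedSpace ℝ E]

lemma d2_eq {f : E → ℝ} {x : E} (hf : ContDiffAt ℝ 2 f x) (v : E) :
    iteratedFDeriv ℝ 2 f x ![v, v] = fderiv ℝ (fun y => fderiv ℝ f y v) x v := by
  have hd : DifferentiableAt ℝ (fderiv ℝ f) x :=
    (hf.fderiv_right (m := 1) (by norm_num)).differentiableAt one_ne_zero
  have heq : fderiv ℝ (fun y => fderiv ℝ f y v) x
      = (ContinuousLinearMap.apply ℝ ℝ v).comp (fderiv ℝ (fderiv ℝ f) x) :=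
    ((ContinuousLinearMap.apply ℝ ℝ v).hasFDerivAt.comp x hd.hasFDerivAt).fderiv
  rw [iteratedFDeriv_two_apply, heq]
  simp

lemma diff_fderiv_apply {f : E → ℝ} {x : E} (hf : ContDiffAt ℝ 2 f x) (v : E) :
    DifferentiableAt ℝ (fun y => fderiv ℝ f y v) x := by
  have hd : DifferentiableAt ℝ (fderiv ℝ f) x :=
    (hf.fderiv_right (m := 1) (by norm_num)).differentiableAt one_ne_zero
  exact (ContinuousLinearMap.apply ℝ ℝ v).differentiable.differentiableAt.comp x hd

end


section
variable {E : Type*} [NormedAddCommGroup E] [InnerProductSpace ℝ E] [FiniteDimensional ℝ E]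

lemma grad_inner (f : E → ℝ) (x w : E) : fderiv ℝ f x w = inner ℝ (gradient f x) w :=
  (InnerProductSpace.toDual_symm_apply).symm

lemma parseval_sq (g : E → ℝ) (x : E) :
    ∑ i, (fderiv ℝ g x ((stdOrthonormalBasis ℝ E) i)) ^ 2 = ‖gradient g x‖ ^ 2 := by
  have h := (stdOrthonormalBasis ℝ E).sum_inner_mul_inner (gradient g x) (gradient g x)
  calc ∑ i, (fderiv ℝ g x ((stdOrthonormalBasis ℝ E) i)) ^ 2
      = ∑ i, (inner (𝕜 := ℝ) (gradient g x) ((stdOrthonormalBasis ℝ E) i)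
          * inner (𝕜 := ℝ) ((stdOrthonormalBasis ℝ E) i) (gradient g x)) := by
        refine Finset.sum_congr rfl fun i _ => ?_
        rw [grad_inner, real_inner_comm (gradient g x)]
        ring
    _ = inner (𝕜 := ℝ) (gradient g x) (gradient g x) := h
    _ = ‖gradient g x‖ ^ 2 := real_inner_self_eq_norm_sq _

end


/-- The Laplacian of `f : E → ℝ` at `x`: the trace of the Hessian (second iterated
Fréchet derivative) computed in an orthonormal basis of `E`. -/
noncomputable def laplacian {E : Type*} [NormedAddCommGroup E] [InnerProductSpace ℝ E]
    [FiniteDimensional ℝ E] (f : E → ℝ) (x : E) : ℝ :=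
  ∑ i, iteratedFDeriv ℝ 2 f x ![(stdOrthonormalBasis ℝ E) i, (stdOrthonormalBasis ℝ E) i]

/-- For `C²` functions `χ ≥ 0` and `u ≥ 1` on an open set `U`, with
`ρ = e^{-χ}`, `h = ρ(u-1)+1`, `φ = -log u`, `A = ρ(u-1)/h`, `B = ρu/h`, one has
`-Δ(log h)(x) ≤ A(x)Δχ(x) + B(x)Δφ(x) + 2‖∇ρ(x)‖‖∇u(x)‖/h(x)²`. -/
theorem neg_laplacian_log_interpolated_metric_le
    {E : Type*} [NormedAddCommGroup E] [InnerProductSpace ℝ E] [FiniteDimensional ℝ E]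
    (U : Set E) (hU : IsOpen U) (x : E) (hx : x ∈ U)
    (χ u : E → ℝ) (hχ : ContDiffOn ℝ 2 χ U) (hu : ContDiffOn ℝ 2 u U)
    (hχ0 : ∀ y ∈ U, 0 ≤ χ y) (hu1 : ∀ y ∈ U, 1 ≤ u y)
    (ρ h φ : E → ℝ) (A B : E → ℝ)
    (hρ : ∀ y, ρ y = Real.exp (-χ y))
    (hh : ∀ y, h y = ρ y * (u y - 1) + 1)
    (hφ : ∀ y, φ y = -Real.log (u y))
    (hA : ∀ y, A y = ρ y * (u y - 1) / h y)
    (hB : ∀ y, B y = ρ y * u y / h y) :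
    -laplacian (fun y => Real.log (h y)) x ≤
      A x * laplacian χ x + B x * laplacian φ x
        + 2 * ‖gradient ρ x‖ * ‖gradient u x‖ / (h x) ^ 2 := by
  have hUx : U ∈ nhds x := hU.mem_nhds hx
  have hχx : ContDiffAt ℝ 2 χ x := hχ.contDiffAt hUx
  have hux : ContDiffAt ℝ 2 u x := hu.contDiffAt hUx
  have hupos : (0:ℝ) < u x := lt_of_lt_of_le zero_lt_one (hu1 x hx)
  have hHpos : (0:ℝ) < Real.exp (-χ x) * (u x - 1) + 1 := by
    have h1 := hu1 x hx; have h2 := Real.exp_pos (-χ x); nlinarith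
  have e1 : (fun y => Real.log (h y)) = fun y => Real.log (Real.exp (-χ y) * (u y - 1) + 1) :=
    funext fun y => by rw [hh, hρ]
  have e3 : ρ = fun y => Real.exp (-χ y) := funext hρ
  have e6 : h x = Real.exp (-χ x) * (u x - 1) + 1 := by rw [hh, hρ]
  have e2 : φ = fun y => -Real.log (u y) := funext hφ
  have e4 : A x = Real.exp (-χ x) * (u x - 1) / (Real.exp (-χ x) * (u x - 1) + 1) := by
    rw [hA, hρ, e6]
  have e5 : B x = Real.exp (-χ x) * u x / (Real.exp (-χ x) * (u x - 1) + 1) := by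
    rw [hB, hρ, e6]
  rw [e1, e2, e3, e4, e5, e6]
  have hLc : ContDiffAt ℝ 2 (fun y => Real.log (Real.exp (-χ y) * (u y - 1) + 1)) x :=
    ((hχx.neg.exp.mul (hux.sub contDiffAt_const)).add contDiffAt_const).log (ne_of_gt hHpos)
  have hφc : ContDiffAt ℝ 2 (fun y => -Real.log (u y)) x :=
    (hux.log (ne_of_gt hupos)).neg
  unfold laplacian
  set b := stdOrthonormalBasis ℝ E with hb
  have sL : ∀ i, iteratedFDeriv ℝ 2 (fun y => Real.log (Real.exp (-χ y) * (u y - 1) + 1)) x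
      ![b i, b i] = fderiv ℝ (fun y => fderiv ℝ
        (fun z => Real.log (Real.exp (-χ z) * (u z - 1) + 1)) y (b i)) x (b i) :=
    fun i => d2_eq hLc (b i)
  have sχ : ∀ i, iteratedFDeriv ℝ 2 χ x ![b i, b i]
      = fderiv ℝ (fun y => fderiv ℝ χ y (b i)) x (b i) := fun i => d2_eq hχx (b i)
  have sφ : ∀ i, iteratedFDeriv ℝ 2 (fun y => -Real.log (u y)) x ![b i, b i]
      = fderiv ℝ (fun y => fderiv ℝ (fun z => -Real.log (u z)) y (b i)) x (b i) :=
    fun i => d2_eq hφc (b i)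
  simp only [sL, sχ, sφ]
  rw [← Finset.sum_neg_distrib]
  have step1 : ∑ i, -(fderiv ℝ (fun y => fderiv ℝ
        (fun z => Real.log (Real.exp (-χ z) * (u z - 1) + 1)) y (b i)) x (b i)) ≤
      ∑ i, (Real.exp (-χ x) * (u x - 1) / (Real.exp (-χ x) * (u x - 1) + 1) *
          fderiv ℝ (fun y => fderiv ℝ χ y (b i)) x (b i)
        + Real.exp (-χ x) * u x / (Real.exp (-χ x) * (u x - 1) + 1) *
          fderiv ℝ (fun y => fderiv ℝ (fun z => -Real.log (u z)) y (b i)) x (b i)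
        + 2 * |fderiv ℝ (fun z => Real.exp (-χ z)) x (b i)| * |fderiv ℝ u x (b i)|
            / (Real.exp (-χ x) * (u x - 1) + 1) ^ 2) :=
    Finset.sum_le_sum fun i _ => key_dir U hU x hx χ u hχ hu hχ0 hu1 (b i)
  refine le_trans step1 ?_
  rw [Finset.sum_add_distrib, Finset.sum_add_distrib, ← Finset.mul_sum, ← Finset.mul_sum]
  gcongr ?_ + ?_ + ?_ <;> try exact le_refl _
  -- remaining: cross term
  · have cs2 : (∑ i, |fderiv ℝ (fun z => Real.exp (-χ z)) x (b i)| * |fderiv ℝ u x (b i)|) ^ 2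
        ≤ (∑ i, |fderiv ℝ (fun z => Real.exp (-χ z)) x (b i)| ^ 2)
          * (∑ i, |fderiv ℝ u x (b i)| ^ 2) :=
      Finset.sum_mul_sq_le_sq_mul_sq _ _ _
    have eq1 : (∑ i, |fderiv ℝ (fun z => Real.exp (-χ z)) x (b i)| ^ 2)
        = ‖gradient (fun y => Real.exp (-χ y)) x‖ ^ 2 := by
      rw [← parseval_sq (fun y => Real.exp (-χ y)) x]
      exact Finset.sum_congr rfl fun i _ => sq_abs _
    have eq2 : (∑ i, |fderiv ℝ u x (b i)| ^ 2) = ‖gradient u x‖ ^ 2 := by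
      rw [← parseval_sq u x]
      exact Finset.sum_congr rfl fun i _ => sq_abs _
    have hS0 : 0 ≤ ∑ i, |fderiv ℝ (fun z => Real.exp (-χ z)) x (b i)| * |fderiv ℝ u x (b i)| :=
      Finset.sum_nonneg fun i _ => mul_nonneg (abs_nonneg _) (abs_nonneg _)
    have cs : (∑ i, |fderiv ℝ (fun z => Real.exp (-χ z)) x (b i)| * |fderiv ℝ u x (b i)|)
        ≤ ‖gradient (fun y => Real.exp (-χ y)) x‖ * ‖gradient u x‖ := by
      rw [eq1, eq2, ← mul_pow] at cs2
      have hP0 : 0 ≤ ‖gradient (fun y => Real.exp (-χ y)) x‖ * ‖gradient u x‖ :=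
        mul_nonneg (norm_nonneg _) (norm_nonneg _)
      nlinarith [cs2, hS0, hP0]
    calc ∑ i, 2 * |fderiv ℝ (fun z => Real.exp (-χ z)) x (b i)| * |fderiv ℝ u x (b i)|
            / (Real.exp (-χ x) * (u x - 1) + 1) ^ 2
        = (∑ i, |fderiv ℝ (fun z => Real.exp (-χ z)) x (b i)| * |fderiv ℝ u x (b i)|)
            * (2 / (Real.exp (-χ x) * (u x - 1) + 1) ^ 2) := by
          rw [Finset.sum_mul]
          exact Finset.sum_congr rfl fun i _ => by ring
      _ ≤ (‖gradient (fun y => Real.exp (-χ y)) x‖ * ‖gradient u x‖)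
            * (2 / (Real.exp (-χ x) * (u x - 1) + 1) ^ 2) := by
          apply mul_le_mul_of_nonneg_right cs
          positivity
      _ = 2 * ‖gradient (fun y => Real.exp (-χ y)) x‖ * ‖gradient u x‖
            / (Real.exp (-χ x) * (u x - 1) + 1) ^ 2 := by ring
end

section
/- Let m ≥ 1, w, v ∈ ℂ^m, and s ∈ ℝ with 0 ≤ s ≤ 1. Define g : ℂ → ℝ by g(t) = log(1 + ‖w + t·v‖²). Then Δg(0) ≥ s·‖∇g(0)‖²/(1+‖w‖²); equivalently, Δ(−g)(0) + s·‖∇g(0)‖²/(1+‖w‖²) ≤ 0. -/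
open Complex

/-- The Laplacian `∂²g/∂x² + ∂²g/∂y²` of `g : ℂ → ℝ` at `t`, with `ℂ` identified with
`ℝ²` via `t = x + iy`: the trace of the real Hessian in the orthonormal basis `{1, i}`. -/
noncomputable def laplacianC (g : ℂ → ℝ) (t : ℂ) : ℝ :=
  iteratedFDeriv ℝ 2 g t ![1, 1] + iteratedFDeriv ℝ 2 g t ![Complex.I, Complex.I]

private noncomputable def Lxy (b c : ℝ) : ℂ →L[ℝ] ℝ := b • Complex.reCLM + c • Complex.imCLM

private lemma Lxy_apply (b c : ℝ) (u : ℂ) : Lxy b c u = b * u.re + c * u.im := by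
  simp [Lxy]

section core
variable (C ar ai n : ℝ)

private noncomputable def qf : ℂ → ℝ :=
  fun t => C + 2*(t.re*ar - t.im*ai) + (t.re*t.re+t.im*t.im)*n

private lemma hasFDerivAt_qf (t : ℂ) :
    HasFDerivAt (qf C ar ai n)
      (Lxy (2*ar + 2*n*t.re) (-(2*ai) + 2*n*t.im)) t := by
  have hre : HasFDerivAt (fun t : ℂ => t.re) Complex.reCLM t := Complex.reCLM.hasFDerivAt
  have him : HasFDerivAt (fun t : ℂ => t.im) Complex.imCLM t := Complex.imCLM.hasFDerivAt
  have h := ((hasFDerivAt_const C t).add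
      (((hre.mul_const ar).sub (him.mul_const ai)).const_mul 2)).add
      (((hre.mul hre).add (him.mul him)).mul_const n)
  refine h.congr_fderiv ?_
  ext u
  simp [Lxy]
  ring

private lemma hasFDerivAt_logqf (hq : ∀ t : ℂ, 0 < qf C ar ai n t) (t : ℂ) :
    HasFDerivAt (fun t : ℂ => Real.log (qf C ar ai n t))
      ((qf C ar ai n t)⁻¹ • Lxy (2*ar + 2*n*t.re) (-(2*ai) + 2*n*t.im)) t :=
  (hasFDerivAt_qf C ar ai n t).log (ne_of_gt (hq t))

private lemma fderiv_logqf (hq : ∀ t : ℂ, 0 < qf C ar ai n t) :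
    fderiv ℝ (fun t : ℂ => Real.log (qf C ar ai n t)) =
      fun t => (qf C ar ai n t)⁻¹ • Lxy (2*ar + 2*n*t.re) (-(2*ai) + 2*n*t.im) :=
  funext fun t => (hasFDerivAt_logqf C ar ai n hq t).fderiv

private lemma laplacian_logqf (hq : ∀ t : ℂ, 0 < qf C ar ai n t) :
    laplacianC (fun t : ℂ => Real.log (qf C ar ai n t)) 0
      = 4*n/C - (4*(ar^2+ai^2))/C^2 := by
  have hC0 : qf C ar ai n 0 = C := by simp [qf]
  have hCpos : 0 < C := hC0 ▸ hq 0
  -- derivative of t ↦ (qf t)⁻¹ at 0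
  have hinv : HasFDerivAt (fun t : ℂ => (qf C ar ai n t)⁻¹)
      ((-(C^2)⁻¹) • Lxy (2*ar + 2*n*(0:ℂ).re) (-(2*ai) + 2*n*(0:ℂ).im)) 0 := by
    have := (hasDerivAt_inv (x := qf C ar ai n 0) (by rw [hC0]; exact ne_of_gt hCpos)).comp_hasFDerivAt
      0 (hasFDerivAt_qf C ar ai n 0)
    rw [hC0] at this
    exact this
  -- derivative of t ↦ Lxy (2ar+2n t.re) (−2ai+2n t.im) at 0
  have hre : HasFDerivAt (fun t : ℂ => t.re) Complex.reCLM (0:ℂ) := Complex.reCLM.hasFDerivAt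
  have him : HasFDerivAt (fun t : ℂ => t.im) Complex.imCLM (0:ℂ) := Complex.imCLM.hasFDerivAt
  have h1 : HasFDerivAt (fun t : ℂ => 2*ar + 2*n*t.re) ((2*n) • Complex.reCLM) (0:ℂ) := by
    simpa [smul_smul] using (hre.const_mul (2*n)).const_add (2*ar)
  have h2 : HasFDerivAt (fun t : ℂ => -(2*ai) + 2*n*t.im) ((2*n) • Complex.imCLM) (0:ℂ) := by
    simpa [smul_smul] using (him.const_mul (2*n)).const_add (-(2*ai))
  have hL : HasFDerivAt (fun t : ℂ => Lxy (2*ar + 2*n*t.re) (-(2*ai) + 2*n*t.im))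
      (((2*n) • Complex.reCLM).smulRight Complex.reCLM
        + ((2*n) • Complex.imCLM).smulRight Complex.imCLM) (0:ℂ) := by
    have := (h1.smul (hasFDerivAt_const (Complex.reCLM) (0:ℂ))).add
      (h2.smul (hasFDerivAt_const (Complex.imCLM) (0:ℂ)))
    simp only [Lxy, smul_zero, zero_add] at this ⊢
    convert this using 1
    try abel
    all_goals rfl
  have hG : HasFDerivAt (fun t : ℂ => (qf C ar ai n t)⁻¹ • Lxy (2*ar + 2*n*t.re) (-(2*ai) + 2*n*t.im)) _ 0 := hinv.smul hL
  have hfd := fderiv_logqf C ar ai n hq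
  rw [laplacianC, iteratedFDeriv_two_apply, iteratedFDeriv_two_apply, hfd,
    hG.fderiv]
  simp only [Matrix.cons_val_zero, Matrix.cons_val_one, Matrix.head_cons,
    ContinuousLinearMap.add_apply, ContinuousLinearMap.smul_apply,
    ContinuousLinearMap.smulRight_apply, ContinuousLinearMap.coe_smul', Pi.smul_apply,
    Lxy_apply, Complex.reCLM_apply, Complex.imCLM_apply, hC0,
    Complex.one_re, Complex.one_im, Complex.I_re, Complex.I_im,
    Complex.zero_re, Complex.zero_im, smul_eq_mul]
  field_simp
  ring

private lemma gradient_logqf (hq : ∀ t : ℂ, 0 < qf C ar ai n t) :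
    gradient (fun t : ℂ => Real.log (qf C ar ai n t)) 0
      = Complex.mk (2*ar/C) (-(2*ai)/C) := by
  have hC0 : qf C ar ai n 0 = C := by simp [qf]
  have hCpos : 0 < C := hC0 ▸ hq 0
  have h := hasFDerivAt_logqf C ar ai n hq 0
  rw [hasFDerivAt_iff_hasGradientAt] at h
  have key : (InnerProductSpace.toDual ℝ ℂ) (Complex.mk (2*ar/C) (-(2*ai)/C))
      = (qf C ar ai n 0)⁻¹ • Lxy (2*ar + 2*n*(0:ℂ).re) (-(2*ai) + 2*n*(0:ℂ).im) := by
    ext u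
    rw [InnerProductSpace.toDual_apply_apply, Complex.inner]
    simp only [ContinuousLinearMap.coe_smul', Pi.smul_apply, Lxy_apply,
      Complex.zero_re, Complex.zero_im, hC0, smul_eq_mul, Complex.mul_re,
      Complex.conj_re, Complex.conj_im]
    field_simp
    ring
  rw [h.gradient, ← key, LinearIsometryEquiv.symm_apply_apply]


end core

/-- For `w, v ∈ ℂ^m`, `0 ≤ s ≤ 1`, and `g(t) = log(1 + ‖w + t·v‖²)`, one
has `Δg(0) ≥ s‖∇g(0)‖²/(1+‖w‖²)`, i.e. `Δ(−g)(0) + s‖∇g(0)‖²/(1+‖w‖²) ≤ 0`. -/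
theorem laplacian_dominates_gradient_term (m : ℕ) (hm : 1 ≤ m)
    (w v : EuclideanSpace ℂ (Fin m)) (s : ℝ) (hs0 : 0 ≤ s) (hs1 : s ≤ 1) :
    s * ‖gradient (fun t : ℂ => Real.log (1 + ‖w + t • v‖ ^ 2)) 0‖ ^ 2 / (1 + ‖w‖ ^ 2) ≤
      laplacianC (fun t : ℂ => Real.log (1 + ‖w + t • v‖ ^ 2)) 0 := by
  set a : ℂ := inner ℂ w v with ha
  set C : ℝ := 1 + ‖w‖ ^ 2 with hC
  set n : ℝ := ‖v‖ ^ 2 with hn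
  have hfun : (fun t : ℂ => Real.log (1 + ‖w + t • v‖ ^ 2)) =
      fun t : ℂ => Real.log (qf C a.re a.im n t) := by
    funext t
    congr 1
    rw [qf, norm_add_sq (𝕜 := ℂ), inner_smul_right, norm_smul]
    simp only [Complex.mul_re, mul_pow, Complex.sq_norm,
      Complex.normSq_apply, RCLike.re_to_complex]
    ring
  have hq : ∀ t : ℂ, 0 < qf C a.re a.im n t := by
    intro t
    have : qf C a.re a.im n t = 1 + ‖w + t • v‖ ^ 2 := by
      rw [qf, norm_add_sq (𝕜 := ℂ), inner_smul_right, norm_smul]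
      simp only [Complex.mul_re, mul_pow, Complex.sq_norm,
        Complex.normSq_apply, RCLike.re_to_complex]
      ring
    rw [this]
    positivity
  rw [hfun, laplacian_logqf C a.re a.im n hq, gradient_logqf C a.re a.im n hq]
  have hCS : a.re ^ 2 + a.im ^ 2 ≤ (C - 1) * n := by
    have h1 : ‖a‖ ≤ ‖w‖ * ‖v‖ := norm_inner_le_norm (𝕜 := ℂ) w v
    have h2 : ‖a‖ ^ 2 ≤ (‖w‖ * ‖v‖) ^ 2 :=
      pow_le_pow_left₀ (norm_nonneg a) h1 2
    have h3 : ‖a‖ ^ 2 = a.re ^ 2 + a.im ^ 2 := by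
      rw [Complex.sq_norm, Complex.normSq_apply]; ring
    rw [h3] at h2
    calc a.re ^ 2 + a.im ^ 2 ≤ (‖w‖ * ‖v‖) ^ 2 := h2
      _ = (C - 1) * n := by rw [hC, hn]; ring
  have hC1 : 1 ≤ C := by rw [hC]; nlinarith [sq_nonneg ‖w‖]
  have hn0 : 0 ≤ n := by positivity
  have hnorm : ‖(Complex.mk (2*a.re/C) (-(2*a.im)/C))‖ ^ 2
      = (2*a.re/C)^2 + (-(2*a.im)/C)^2 := by
    rw [Complex.sq_norm, Complex.normSq_apply]; ring
  rw [hnorm]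
  have hCpos : (0:ℝ) < C := by linarith
  set A := a.re ^ 2 + a.im ^ 2 with hA
  have hA0 : 0 ≤ A := by positivity
  have h1 : s * ((2*a.re/C)^2 + (-(2*a.im)/C)^2) / C = 4*A*s / C^3 := by
    rw [hA]; field_simp; ring
  have h2 : (4*n/C - 4*A/C^2) * C^3 = 4*n*C^2 - 4*A*C := by
    field_simp
  rw [h1, div_le_iff₀ (by positivity : (0:ℝ) < C^3), h2]
  nlinarith [mul_le_of_le_one_right hA0 hs1,
    mul_le_mul_of_nonneg_right hCS (by linarith : (0:ℝ) ≤ C + 1), hn0]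
end
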